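/- With u orthonormal on p, the dual recurrence n_i Q_n(x;u) = ∑_{j,l=1}^d x_j u_j^{(i)} u_l^{(i)} p_l Q_n(x - e_j + e_l; u) holds for each i = 0,…,d-1 and each x with |x| = N (where n is indexed by n^+ = (n_0,…,n_{d-1}) with |n^+| = N). -/

import Mathlib

open MvPolynomial

/-- Multivariate Krawtchouk polynomial `Q_n(x;u)`. -/
noncomputable def QK (d : ℕ) [NeZero d] (u : Fin d → Fin d → ℝ) (n x : Fin d → ℕ) : ℝ :=
  MvPolynomial.coeff (Finsupp.equivFunOnFinite.symm n)
    (∏ j, (1 + ∑ l ∈ Finset.univ.erase 0, MvPolynomial.X l * MvPolynomial.C (u l j)) ^ x j)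

section Aux

variable {d : ℕ} [NeZero d] (u : Fin d → Fin d → ℝ)

/-- The factor `φ_j(w) = 1 + ∑_{l≠0} w_l u_l(j)` of the generating polynomial. -/
noncomputable def phiP (j : Fin d) : MvPolynomial (Fin d) ℝ :=
  1 + ∑ l ∈ Finset.univ.erase 0, X l * C (u l j)

/-- Generating polynomial `F_x(w) = ∏_j φ_j(w)^{x_j}`. -/
noncomputable def FP (x : Fin d → ℕ) : MvPolynomial (Fin d) ℝ :=
  ∏ j, phiP u j ^ x j

lemma QK_eq (n x : Fin d → ℕ) :
    QK d u n x = coeff (Finsupp.equivFunOnFinite.symm n) (FP u x) := rfl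

lemma coeff_pderiv' (i : Fin d) (m : Fin d →₀ ℕ) (f : MvPolynomial (Fin d) ℝ) :
    coeff m (pderiv i f) = ((m i : ℝ) + 1) * coeff (m + Finsupp.single i 1) f := by
  induction f using MvPolynomial.induction_on' with
  | monomial s a =>
    rw [pderiv_monomial, coeff_monomial, coeff_monomial]
    by_cases h : s = m + Finsupp.single i 1
    · subst h
      rw [if_pos (add_tsub_cancel_right _ _), if_pos rfl]
      simp only [Finsupp.add_apply, Finsupp.single_eq_same]
      push_cast
      ring
    · rw [if_neg h, mul_zero]
      by_cases h2 : s - Finsupp.single i 1 = m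
      · rw [if_pos h2]
        have hsi : s i = 0 := by
          by_contra hs
          apply h
          rw [← h2, tsub_add_cancel_of_le]
          exact Finsupp.single_le_iff.mpr (Nat.one_le_iff_ne_zero.mpr hs)
        simp [hsi]
      · rw [if_neg h2]
  | add p q hp hq =>
    simp only [map_add, coeff_add, hp, hq]
    ring

lemma pderiv_finset_prod {κ : Type*} [DecidableEq κ] (i : Fin d) (s : Finset κ)
    (f : κ → MvPolynomial (Fin d) ℝ) :
    pderiv i (∏ j ∈ s, f j) = ∑ j ∈ s, pderiv i (f j) * ∏ m ∈ s.erase j, f m := by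
  induction s using Finset.induction_on with
  | empty => simp
  | @insert a s ha ih =>
    rw [Finset.prod_insert ha, pderiv_mul, ih, Finset.sum_insert ha, Finset.erase_insert ha,
      Finset.mul_sum]
    congr 1
    apply Finset.sum_congr rfl
    intro j hj
    have hja : j ≠ a := by rintro rfl; exact ha hj
    rw [Finset.erase_insert_of_ne hja.symm, Finset.prod_insert (fun hmem => ha (Finset.mem_of_mem_erase hmem))]
    ring

lemma pderiv_phiP {i : Fin d} (hi : i ≠ 0) (j : Fin d) :
    pderiv i (phiP u j) = C (u i j) := by
  have key : ∀ l : Fin d, pderiv i (X l * C (u l j)) = if l = i then C (u l j) else 0 := by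
    intro l
    rw [pderiv_mul, pderiv_C, mul_zero, add_zero]
    by_cases h : l = i
    · subst h; rw [pderiv_X_self, one_mul, if_pos rfl]
    · rw [pderiv_X_of_ne h, zero_mul, if_neg h]
  rw [phiP, map_add, pderiv_one, zero_add, map_sum, Finset.sum_congr rfl (fun l _ => key l),
    Finset.sum_ite_eq' (Finset.univ.erase 0) i (fun l => C (u l j)),
    if_pos (Finset.mem_erase.mpr ⟨hi, Finset.mem_univ i⟩)]

lemma FP_add_single (y : Fin d → ℕ) (l : Fin d) :
    FP u (fun m => y m + if m = l then 1 else 0) = phiP u l * FP u y := by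
  unfold FP
  simp only [pow_add, pow_ite, pow_one, pow_zero]
  rw [Finset.prod_mul_distrib, Finset.prod_ite_eq' Finset.univ l (fun m => phiP u m),
    if_pos (Finset.mem_univ l), mul_comm]

lemma FP_sub_single {y : Fin d → ℕ} {j : Fin d} (hy : y j ≠ 0) :
    phiP u j * FP u (fun m => y m - if m = j then 1 else 0) = FP u y := by
  rw [← FP_add_single]
  congr 1
  funext m
  by_cases h : m = j
  · subst h; simp; omega
  · simp [h]

lemma FP_sub_eq (y : Fin d → ℕ) (j : Fin d) :
    FP u (fun m => y m - if m = j then 1 else 0) =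
      phiP u j ^ (y j - 1) * ∏ m ∈ Finset.univ.erase j, phiP u m ^ y m := by
  unfold FP
  rw [← Finset.mul_prod_erase Finset.univ _ (Finset.mem_univ j)]
  congr 1
  · simp
  · apply Finset.prod_congr rfl
    intro m hm
    simp [Finset.ne_of_mem_erase hm]

lemma pderiv_FP {i : Fin d} (hi : i ≠ 0) (x : Fin d → ℕ) :
    pderiv i (FP u x) =
      ∑ j, (x j : ℝ) • (C (u i j) * FP u (fun m => x m - if m = j then 1 else 0)) := by
  rw [FP, pderiv_finset_prod]
  apply Finset.sum_congr rfl
  intro j _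
  rw [pderiv_pow, pderiv_phiP u hi, FP_sub_eq, smul_eq_C_mul, ← C_eq_coe_nat]
  ring

lemma FP_key (x : Fin d → ℕ) :
    ((∑ j, x j : ℕ) : ℝ) • FP u x =
      (∑ j, (x j : ℝ) • FP u (fun m => x m - if m = j then 1 else 0)) +
        ∑ m ∈ Finset.univ.erase 0, X m * pderiv m (FP u x) := by
  have h1 : ∀ j : Fin d, (x j : ℝ) • FP u x
      = (x j : ℝ) • FP u (fun m => x m - if m = j then 1 else 0)
        + ∑ m ∈ Finset.univ.erase 0,
            X m * ((x j : ℝ) • (C (u m j) * FP u (fun m => x m - if m = j then 1 else 0))) := by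
    intro j
    by_cases hxj : x j = 0
    · simp [hxj]
    · rw [← FP_sub_single u hxj]
      set G := FP u (fun m => x m - if m = j then 1 else 0) with hG
      rw [phiP, add_mul, one_mul, smul_add]
      congr 1
      rw [Finset.sum_mul, Finset.smul_sum]
      apply Finset.sum_congr rfl
      intro m _
      rw [mul_assoc, mul_smul_comm]
  calc ((∑ j, x j : ℕ) : ℝ) • FP u x = ∑ j, (x j : ℝ) • FP u x := by
        rw [← Finset.sum_smul, Nat.cast_sum]
    _ = _ := by
        rw [Finset.sum_congr rfl (fun j _ => h1 j), Finset.sum_add_distrib]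
        congr 1
        rw [Finset.sum_comm]
        apply Finset.sum_congr rfl
        intro m hm
        rw [← Finset.mul_sum, pderiv_FP u (Finset.mem_erase.mp hm).1]

lemma coeff_X_mul_pderiv (n' : Fin d →₀ ℕ) (i : Fin d) (f : MvPolynomial (Fin d) ℝ) :
    coeff n' (X i * pderiv i f) = (n' i : ℝ) * coeff n' f := by
  rw [coeff_X_mul']
  by_cases h : i ∈ n'.support
  · rw [if_pos h, coeff_pderiv']
    have h1 : n' i ≠ 0 := Finsupp.mem_support_iff.mp h
    have h2 : (n' - Finsupp.single i 1) + Finsupp.single i 1 = n' :=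
      tsub_add_cancel_of_le (Finsupp.single_le_iff.mpr (Nat.one_le_iff_ne_zero.mpr h1))
    rw [h2]
    congr 1
    rw [Finsupp.tsub_apply, Finsupp.single_eq_same]
    have h3 : n' i - 1 + 1 = n' i := Nat.succ_pred_eq_of_ne_zero h1
    rw [← h3]
    push_cast
    ring
  · rw [if_neg h, Finsupp.notMem_support_iff.mp h]
    simp

end Aux

/-- Dual recurrence for the multivariate Krawtchouk polynomials (u orthonormal on p):
`n_i Q_n(x;u) = ∑_{j,l} x_j u_j^{(i)} u_l^{(i)} p_l Q_n(x-e_j+e_l;u)`,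
where `n` is indexed by `n⁺ = (n₀,…,n_{d-1})` with `n₀ = N - |n|`. -/
theorem multivariate_krawtchouk_dual_recurrence
    (d N : ℕ) [NeZero d] (hd : 2 ≤ d)
    (p : Fin d → ℝ) (hp : ∀ j, 0 < p j) (hpsum : ∑ j, p j = 1)
    (u : Fin d → Fin d → ℝ) (hu0 : ∀ j, u 0 j = 1)
    (horth : ∀ l m, ∑ i, u l i * u m i * p i = if l = m then (1 : ℝ) else 0)
    (x : Fin d → ℕ) (hx : ∑ j, x j = N)
    (n : Fin d → ℕ) (hn0 : n 0 = 0) (hn : ∑ i, n i ≤ N)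
    (i : Fin d) :
    ((if i = 0 then N - ∑ m, n m else n i : ℕ) : ℝ) * QK d u n x =
      ∑ j, ∑ l,
        (x j : ℝ) * u i j * u i l * p l *
          QK d u n
            (fun m => x m - (if m = j then 1 else 0) + if m = l then 1 else 0) := by
  set n' : Fin d →₀ ℕ := Finsupp.equivFunOnFinite.symm n with hn'
  have hn'app : ∀ m, n' m = n m := fun m => rfl
  set G : Fin d → MvPolynomial (Fin d) ℝ :=
    fun j => FP u (fun m => x m - if m = j then 1 else 0) with hGdef
  -- ψ_i identity
  have hpsi : (∑ l, C (u i l * p l) * phiP u l)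
      = (if i = 0 then 1 else X i : MvPolynomial (Fin d) ℝ) := by
    have expand : ∀ l, C (u i l * p l) * phiP u l
        = C (u i l * p l) + ∑ m ∈ Finset.univ.erase 0, X m * C (u m l * (u i l * p l)) := by
      intro l
      rw [phiP, mul_add, mul_one, Finset.mul_sum]
      congr 1
      apply Finset.sum_congr rfl
      intro m _
      simp only [map_mul]
      ring
    rw [Finset.sum_congr rfl (fun l _ => expand l), Finset.sum_add_distrib, ← map_sum,
      Finset.sum_comm]
    have h0 : ∑ l, u i l * p l = if i = 0 then (1 : ℝ) else 0 := by
      have h := horth i 0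
      simp only [hu0, mul_one] at h
      exact h
    have h2 : ∀ m ∈ Finset.univ.erase (0 : Fin d),
        ∑ l, (X m * C (u m l * (u i l * p l)) : MvPolynomial (Fin d) ℝ)
          = X m * C (if m = i then 1 else 0) := by
      intro m _
      rw [← Finset.mul_sum, ← map_sum]
      congr 2
      rw [← horth m i]
      apply Finset.sum_congr rfl
      intro l _
      ring
    rw [h0, Finset.sum_congr rfl h2]
    by_cases hi : i = 0
    · subst hi
      rw [if_pos rfl, if_pos rfl, map_one]
      have hz : ∀ m ∈ Finset.univ.erase (0 : Fin d),
          (X m * C (if m = (0 : Fin d) then (1:ℝ) else 0) : MvPolynomial (Fin d) ℝ) = 0 := by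
        intro m hm
        rw [if_neg (Finset.mem_erase.mp hm).1, map_zero, mul_zero]
      rw [Finset.sum_congr rfl hz, Finset.sum_const_zero, add_zero]
    · rw [if_neg hi, if_neg hi, map_zero, zero_add]
      have hz : ∀ m ∈ Finset.univ.erase (0 : Fin d),
          (X m * C (if m = i then (1:ℝ) else 0) : MvPolynomial (Fin d) ℝ)
            = if m = i then X m else 0 := by
        intro m _
        by_cases h : m = i <;> simp [h]
      rw [Finset.sum_congr rfl hz, Finset.sum_ite_eq' _ i,
        if_pos (Finset.mem_erase.mpr ⟨hi, Finset.mem_univ i⟩)]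
  -- rewrite each QK term
  have hRHS : ∀ j l : Fin d,
      QK d u n (fun m => x m - (if m = j then 1 else 0) + if m = l then 1 else 0)
        = coeff n' (phiP u l * G j) := by
    intro j l
    rw [QK_eq, ← FP_add_single u (fun m => x m - if m = j then 1 else 0) l]
  have inner : ∀ j : Fin d,
      (∑ l, (x j : ℝ) * u i j * u i l * p l * coeff n' (phiP u l * G j))
        = (x j : ℝ) * u i j * coeff n' ((if i = 0 then 1 else X i) * G j) := by
    intro j
    rw [← hpsi, Finset.sum_mul]
    have : ∀ l : Fin d, C (u i l * p l) * phiP u l * G j = C (u i l * p l) * (phiP u l * G j) :=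
      fun l => by ring
    rw [Finset.sum_congr rfl (fun l _ => this l), coeff_sum, Finset.mul_sum]
    apply Finset.sum_congr rfl
    intro l _
    rw [coeff_C_mul]
    ring
  have hRHSeq : (∑ j, ∑ l,
        (x j : ℝ) * u i j * u i l * p l *
          QK d u n (fun m => x m - (if m = j then 1 else 0) + if m = l then 1 else 0))
      = ∑ j, (x j : ℝ) * u i j * coeff n' ((if i = 0 then 1 else X i) * G j) := by
    apply Finset.sum_congr rfl
    intro j _
    rw [← inner j]
    apply Finset.sum_congr rfl
    intro l _
    rw [hRHS j l]
  rw [hRHSeq, QK_eq, ← hn']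
  by_cases hi : i = 0
  · subst hi
    simp only [eq_self_iff_true, if_true, one_mul, hu0, mul_one, hGdef, ← hn']
    -- use FP_key
    have hkey := congrArg (coeff n') (FP_key u x)
    simp only [coeff_smul, coeff_add, coeff_sum, coeff_X_mul_pderiv, smul_eq_mul] at hkey
    have hsn : (∑ m ∈ Finset.univ.erase (0 : Fin d), (n' m : ℝ)) = ∑ m, (n m : ℝ) := by
      rw [Finset.sum_erase _ (by simp [hn'app, hn0])]
      exact Finset.sum_congr rfl (fun m _ => by rw [hn'app])
    rw [← Finset.sum_mul, hsn] at hkey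
    have hcast : ((N - ∑ m, n m : ℕ) : ℝ) = (N : ℝ) - ∑ m, (n m : ℝ) := by
      rw [Nat.cast_sub hn, Nat.cast_sum]
    rw [hcast]
    have hxN : ((∑ j, x j : ℕ) : ℝ) = (N : ℝ) := by exact_mod_cast congrArg Nat.cast hx
    rw [hxN] at hkey
    linarith [hkey]
  · simp only [if_neg hi]
    have hD := pderiv_FP u hi x
    have hmain : coeff n' (X i * pderiv i (FP u x))
        = ∑ j, (x j : ℝ) * u i j * coeff n' (X i * G j) := by
      rw [hD, Finset.mul_sum, coeff_sum]
      apply Finset.sum_congr rfl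
      intro j _
      rw [mul_smul_comm, coeff_smul, smul_eq_mul,
        show X i * (C (u i j) * G j) = C (u i j) * (X i * G j) by ring, coeff_C_mul]
      ring
    simp only [← hn', hGdef]
    rw [← hmain, coeff_X_mul_pderiv, hn'app]
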